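/- Let B be an annihilator nilpotent skew brace. Then the following are equivalent: (1) B is finitely generated as a skew brace; (2) the group (B,+) is finitely generated; (3) the group (B,∘) is finitely generated. -/

import Mathlib

/-- A skew brace: a type with two group structures `(B,+)` and `(B,∘)`
(the multiplicative group is written with `*`) sharing the same underlying set,
such that `a ∘ (b + c) = a ∘ b - a + a ∘ c`. -/
class SkewBrace (B : Type*) extends AddGroup B, Group B where
  circ_add : ∀ a b c : B, a * (b + c) = a * b - a + a * c

namespace SkewBrace

variable {B : Type*} [SkewBrace B]

/-- `lam a b = -a + a ∘ b`, i.e. `λ_a(b)`. -/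
def lam (a b : B) : B := -a + a * b

/-- `a * b` (the star operation) `= λ_a(b) - b = -a + a ∘ b - b`. -/
def starOp (a b : B) : B := -a + a * b - b

/-- `X * Y` : the additive subgroup generated by all `x * y`, `x ∈ X`, `y ∈ Y`,
regarded as a set. -/
def starSpan (X Y : Set B) : Set B :=
  (AddSubgroup.closure {z : B | ∃ x ∈ X, ∃ y ∈ Y, z = starOp x y} : AddSubgroup B)

/-- `[X,Y]₊` : the additive subgroup generated by all additive commutators
`x + y - x - y`, `x ∈ X`, `y ∈ Y`, regarded as a set. -/
def addCommSpan (X Y : Set B) : Set B :=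
  (AddSubgroup.closure {z : B | ∃ x ∈ X, ∃ y ∈ Y, z = x + y - x - y} : AddSubgroup B)

/-- A sub skew brace: a subset containing `0` and closed under both group
operations and both inverses. -/
def IsSubSkewBrace (S : Set B) : Prop :=
  0 ∈ S ∧ (∀ a ∈ S, ∀ b ∈ S, a + b ∈ S) ∧ (∀ a ∈ S, -a ∈ S) ∧
    (∀ a ∈ S, ∀ b ∈ S, a * b ∈ S) ∧ (∀ a ∈ S, a⁻¹ ∈ S)

/-- An ideal: a sub skew brace that is normal in `(B,+)` and in `(B,∘)` and
invariant under all `λ_a`. -/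
def IsIdeal (S : Set B) : Prop :=
  IsSubSkewBrace S ∧ (∀ a : B, ∀ i ∈ S, a + i - a ∈ S) ∧
    (∀ a : B, ∀ i ∈ S, a * i * a⁻¹ ∈ S) ∧ (∀ a : B, ∀ i ∈ S, lam a i ∈ S)

/-- The annihilator `Ann(B) = {x | x∘a = a∘x = x+a = a+x for all a}`. -/
def annSet (B : Type*) [SkewBrace B] : Set B :=
  {x | ∀ a : B, x * a = a * x ∧ x * a = x + a ∧ x + a = a + x}

/-- The annihilator series: `Ann₀(B) = 0` and `Ann_{n+1}(B)` is the preimage of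
`Ann(B/Annₙ(B))` under the quotient map; membership is expressed via coset
equalities modulo `Annₙ(B)`. -/
def annSeries (B : Type*) [SkewBrace B] : ℕ → Set B
  | 0 => {0}
  | n + 1 => {x | ∀ a : B,
      x * a - a * x ∈ annSeries B n ∧
      x * a - (x + a) ∈ annSeries B n ∧
      (x + a) - (a + x) ∈ annSeries B n}

/-- `B` is annihilator nilpotent if `Annₙ(B) = B` for some `n`. -/
def AnnNilpotent (B : Type*) [SkewBrace B] : Prop :=
  ∃ n : ℕ, annSeries B n = Set.univ

/-- `leftPow B n` is `B^{n+1}`: `B¹ = B`, `B^{n+1} = B * Bⁿ`. -/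
def leftPow (B : Type*) [SkewBrace B] : ℕ → Set B
  | 0 => Set.univ
  | n + 1 => starSpan Set.univ (leftPow B n)

/-- `rightPow B n` is `B⁽ⁿ⁺¹⁾`: `B⁽¹⁾ = B`, `B⁽ⁿ⁺¹⁾ = B⁽ⁿ⁾ * B`. -/
def rightPow (B : Type*) [SkewBrace B] : ℕ → Set B
  | 0 => Set.univ
  | n + 1 => starSpan (rightPow B n) Set.univ

/-- `B` is left nilpotent if `Bⁿ = 0` for some `n ≥ 1`. -/
def LeftNilpotent (B : Type*) [SkewBrace B] : Prop :=
  ∃ n : ℕ, leftPow B n = ({0} : Set B)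

/-- `B` is right nilpotent if `B⁽ⁿ⁾ = 0` for some `n ≥ 1`. -/
def RightNilpotent (B : Type*) [SkewBrace B] : Prop :=
  ∃ n : ℕ, rightPow B n = ({0} : Set B)

/-- `strongPow B n` is `B^[n+1]`: `B^[1] = B`, and `B^[n+1]` is the additive
subgroup generated by `⋃_{i=1}^{n} B^[i] * B^[n+1-i]`. -/
def strongPow (B : Type*) [SkewBrace B] : ℕ → Set B
  | 0 => Set.univ
  | n + 1 => (AddSubgroup.closure (⋃ j : Fin (n + 1),
      {z : B | ∃ x ∈ strongPow B j.1, ∃ y ∈ strongPow B (n - j.1), z = starOp x y}) :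
        AddSubgroup B)
  decreasing_by
  · exact j.isLt
  · omega

/-- `B` is strongly nilpotent if `B^[n] = 0` for some `n ≥ 1`. -/
def StronglyNilpotent (B : Type*) [SkewBrace B] : Prop :=
  ∃ n : ℕ, strongPow B n = ({0} : Set B)

/-- `gammaAux B n` is `Γ_[n+1](B)`: `Γ_[1](B) = B` and, for `n ≥ 2`, `Γ_[n](B)` is
the additive subgroup generated by the sets `Γ_[i](B) * Γ_[n-i](B)` and
`[Γ_[i](B), Γ_[n-i](B)]₊` for `1 ≤ i ≤ n-1`. -/
def gammaAux (B : Type*) [SkewBrace B] : ℕ → Set B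
  | 0 => Set.univ
  | n + 1 => (AddSubgroup.closure (⋃ j : Fin (n + 1),
      {z : B | ∃ x ∈ gammaAux B j.1, ∃ y ∈ gammaAux B (n - j.1),
        z = starOp x y ∨ z = x + y - x - y}) : AddSubgroup B)
  decreasing_by
  · exact j.isLt
  · omega

/-- `Γ_[n](B)` for `n ≥ 1` (one-based indexing as in the paper). -/
def gammaBr (B : Type*) [SkewBrace B] (n : ℕ) : Set B := gammaAux B (n - 1)

/-- `B` is finitely generated as a skew brace: there is a finite subset whose
smallest containing sub skew brace is `B` itself. -/
def SBFinitelyGenerated (B : Type*) [SkewBrace B] : Prop :=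
  ∃ S : Set B, S.Finite ∧ ∀ T : Set B, IsSubSkewBrace T → S ⊆ T → T = Set.univ

/-- `B` satisfies the ascending chain condition on sub skew braces. -/
def ACCSubSkewBrace (B : Type*) [SkewBrace B] : Prop :=
  ∀ f : ℕ → Set B, (∀ n, IsSubSkewBrace (f n)) → (∀ n, f n ⊆ f (n + 1)) →
    ∃ N : ℕ, ∀ n, N ≤ n → f n = f N




section Auxiliary

variable {B : Type*} [SkewBrace B]


theorem one_eq_zero : (1 : B) = 0 := by
  have h := circ_add (1 : B) 0 0
  simp only [one_mul, add_zero, zero_sub] at h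
  have := congrArg Neg.neg h
  simpa using this.symm

theorem mul_zero' (a : B) : a * 0 = a := by
  have h := circ_add a 0 0
  rw [add_zero] at h
  have h2 : (0:B) = - a + a * 0 := by
    have := congrArg (fun z => -(a*0) + z) h
    simpa [sub_eq_add_neg, add_assoc] using this
  have := congrArg (fun z => a + z) h2
  simpa [← add_assoc] using this.symm

theorem zero_mul' (a : B) : (0 : B) * a = a := by
  rw [← one_eq_zero, one_mul]

theorem lam_def (a b : B) : lam a b = -a + a * b := rfl

theorem star_def (a b : B) : starOp a b = -a + a * b - b := rfl

theorem lam_eq_star_add (a b : B) : lam a b = starOp a b + b := by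
  simp [lam, starOp]

theorem mul_eq_add_lam (a b : B) : a * b = a + lam a b := by
  simp [lam, ← add_assoc]

theorem mul_eq (a b : B) : a * b = a + starOp a b + b := by
  rw [mul_eq_add_lam, lam_eq_star_add, add_assoc]

theorem star_zero_right (a : B) : starOp a 0 = 0 := by
  simp [starOp, mul_zero']

theorem star_zero_left (a : B) : starOp 0 a = 0 := by
  simp [starOp, zero_mul']

theorem lam_add (a b c : B) : lam a (b + c) = lam a b + lam a c := by
  simp [lam, circ_add a b c, sub_eq_add_neg, add_assoc]

theorem mul_neg' (a b : B) : a * (-b) = a - a * b + a := by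
  have h := circ_add a b (-b)
  rw [add_neg_cancel, mul_zero'] at h
  -- h : a = a * b - a + a * (-b)
  have h2 := congrArg (fun z => -(a*b - a) + z) h
  simp only [sub_eq_add_neg, neg_add_rev, neg_neg, add_assoc, neg_add_cancel_left,
    add_neg_cancel_left, neg_add_cancel, add_neg_cancel, add_zero, zero_add] at h2 ⊢
  exact h2.symm

theorem lam_mul (a b c : B) : lam (a * b) c = lam a (lam b c) := by
  simp only [lam, mul_neg', sub_eq_add_neg]
  rw [circ_add a (-b) (b*c)]
  simp only [mul_neg', sub_eq_add_neg, ← mul_assoc]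
  simp [← add_assoc]

theorem lam_one (b : B) : lam 1 b = b := by
  simp [lam, one_eq_zero, zero_mul']

theorem lam_lam_inv (a b : B) : lam a (lam a⁻¹ b) = b := by
  rw [← lam_mul, mul_inv_cancel, lam_one]

theorem lam_inv_lam (a b : B) : lam a⁻¹ (lam a b) = b := by
  rw [← lam_mul, inv_mul_cancel, lam_one]

theorem mul_lam_inv (a b : B) : a * (lam a⁻¹ b) = a + b := by
  rw [mul_eq_add_lam, lam_lam_inv]

theorem star_mul_left (a b c : B) : starOp (a * b) c = starOp a (starOp b c) + starOp b c + starOp a c := by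
  have h1 : lam (a*b) c = lam a (lam b c) := lam_mul a b c
  have h2 : lam b c = starOp b c + c := lam_eq_star_add b c
  have h3 : lam a (starOp b c + c) = lam a (starOp b c) + lam a c := lam_add a _ _
  have : starOp (a*b) c = lam a (lam b c) - c := by
    rw [← h1]; simp [lam, starOp, sub_eq_add_neg, add_assoc]
  rw [this, h2, h3, lam_eq_star_add, lam_eq_star_add]
  simp [sub_eq_add_neg, add_assoc]

theorem star_add_right (a y z : B) : starOp a (y + z) = starOp a y + (y + starOp a z - y) := by
  simp only [starOp, circ_add a y z, sub_eq_add_neg, neg_add_rev, add_assoc]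
  simp [← add_assoc]

theorem star_inv_self (a : B) : starOp a⁻¹ a = -a⁻¹ - a := by
  simp [starOp, inv_mul_cancel, one_eq_zero, sub_eq_add_neg]

theorem inv_eq' (a : B) : a⁻¹ = -a - starOp a⁻¹ a := by
  rw [star_inv_self]; simp [sub_eq_add_neg]

theorem neg_eq' (a : B) : -a = a⁻¹ + starOp a⁻¹ a := by
  rw [star_inv_self, inv_eq']; simp [sub_eq_add_neg, add_assoc]

theorem star_neg_right (a v : B) : starOp a (-v) = -v - starOp a v + v := by
  have h := star_add_right a v (-v)
  rw [add_neg_cancel, star_zero_right] at h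
  -- h : 0 = starOp a v + (v + starOp a (-v) - v)
  have h2 := congrArg (fun z => -(starOp a v) + z) h
  simp only [add_zero, sub_eq_add_neg] at h2
  simp only [← add_assoc] at h2
  simp only [neg_add_cancel, zero_add] at h2
  -- h2 : -starOp a v = v + starOp a (-v) + -v
  have h3 := congrArg (fun z => -v + z + v) h2
  simp only [add_assoc] at h3
  simp only [neg_add_cancel, add_zero, zero_add] at h3
  simp only [← add_assoc] at h3
  simp only [add_assoc, neg_add_cancel, add_zero, zero_add] at h3
  simp only [sub_eq_add_neg, add_assoc]
  exact h3.symm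

/-- goodness package for a term of the annihilator series -/
structure AnnGood (S : Set B) : Prop where
  zero : (0 : B) ∈ S
  add : ∀ x ∈ S, ∀ y ∈ S, x + y ∈ S
  neg : ∀ x ∈ S, -x ∈ S
  conj : ∀ (a : B), ∀ m ∈ S, a + m + -a ∈ S
  lamm : ∀ (a : B), ∀ m ∈ S, lam a m ∈ S

theorem mem_ann_succ_iff {x : B} {k : ℕ} :
    x ∈ annSeries B (k+1) ↔ ∀ a : B,
      x * a - a * x ∈ annSeries B k ∧
      x * a - (x + a) ∈ annSeries B k ∧
      (x + a) - (a + x) ∈ annSeries B k := Iff.rfl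

theorem ann_mono : ∀ k : ℕ, annSeries B k ⊆ annSeries B (k+1) := by
  intro k
  induction k with
  | zero =>
    intro x hx
    rcases hx with rfl
    intro a
    simp [zero_mul', mul_zero', annSeries]
  | succ n ih =>
    intro x hx a
    exact ⟨ih (hx a).1, ih (hx a).2.1, ih (hx a).2.2⟩

section Quot

variable (M : AddSubgroup B) [M.Normal]

-- abbreviations
local notation "π" => ((QuotientAddGroup.mk : B → B ⧸ M))

theorem pi_eq_iff (u v : B) : π u = π v ↔ u - v ∈ M := QuotientAddGroup.eq_iff_sub_mem

theorem pi_zero_iff (u : B) : π u = 0 ↔ u ∈ M := QuotientAddGroup.eq_zero_iff u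

end Quot

/-- The master induction giving subgroup/normality/λ-invariance of each
annihilator series term. -/
theorem annGood : ∀ k : ℕ, AnnGood (annSeries B k) := by
  intro k
  induction k with
  | zero =>
    constructor <;> simp +contextual [annSeries, lam, mul_zero']
  | succ k ih =>
    -- set up the quotient by the k-th term
    let M : AddSubgroup B :=
      { carrier := annSeries B k
        add_mem' := fun hx hy => ih.add _ hx _ hy
        zero_mem' := ih.zero
        neg_mem' := fun hx => ih.neg _ hx }
    haveI hMn : M.Normal := ⟨fun m hm a => ih.conj a m hm⟩
    set Q := B ⧸ M with hQ
    let π : B → Q := QuotientAddGroup.mk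
    have hπ : ∀ u v : B, π u = π v ↔ u - v ∈ annSeries B k := fun u v =>
      QuotientAddGroup.eq_iff_sub_mem
    have hπ0 : ∀ u : B, π u = 0 ↔ u ∈ annSeries B k := fun u =>
      QuotientAddGroup.eq_zero_iff u
    have πadd : ∀ u v : B, π (u + v) = π u + π v := fun u v => rfl
    have πneg : ∀ u : B, π (-u) = -π u := fun u => rfl
    have πlam : ∀ a m, m ∈ annSeries B k → π (lam a m) = 0 := by
      intro a m hm; exact (hπ0 _).2 (ih.lamm a m hm)
    -- facts about elements of annSeries B (k+1)
    have fact2 : ∀ x ∈ annSeries B (k+1), ∀ a, π (x * a) = π x + π a := by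
      intro x hx a
      have := (hπ _ _).2 ((hx a).2.1)
      rw [this]; rfl
    have fact3 : ∀ x ∈ annSeries B (k+1), ∀ a, π x + π a = π a + π x := by
      intro x hx a
      have := (hπ _ _).2 ((hx a).2.2)
      exact this
    have fact1 : ∀ x ∈ annSeries B (k+1), ∀ a, π (a * x) = π a + π x := by
      intro x hx a
      have h1 := (hπ _ _).2 ((hx a).1)
      rw [← h1, fact2 x hx a, fact3 x hx a]
    -- membership criterion in terms of π
    have memIff : ∀ x : B, x ∈ annSeries B (k+1) ↔ ∀ a : B,
        π (x * a) = π (a * x) ∧ π (x * a) = π (x + a) ∧ π (x + a) = π (a + x) := by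
      intro x
      rw [mem_ann_succ_iff]
      refine forall_congr' fun a => ?_
      rw [← hπ, ← hπ, ← hπ]
    -- congruence on the left argument of ∘
    have congR : ∀ (v a μ : B), μ ∈ annSeries B k → π ((v + μ) * a) = π (v * a) := by
      intro v a μ hμ
      have hν : lam v⁻¹ μ ∈ annSeries B k := ih.lamm _ _ hμ
      have h1 : (v + μ) * a = v * ((lam v⁻¹ μ) * a) := by
        rw [← mul_lam_inv v μ, mul_assoc]
      set ν := lam v⁻¹ μ with hνdef
      have hν1 : ν ∈ annSeries B (k+1) := ann_mono k hν
      have h2 : π (ν * a) = π a := by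
        rw [fact2 ν hν1 a, (hπ0 ν).2 hν, zero_add]
      -- write ν * a = m₄ + a
      have hm4 : ν * a - a ∈ annSeries B k := (hπ _ _).1 h2
      have h3 : ν * a = (ν * a - a) + a := by simp [sub_eq_add_neg, add_assoc]
      set m4 := ν * a - a with hm4def
      have h4 : v * (ν * a) = v * m4 - v + v * a := by
        rw [h3]; exact circ_add v m4 a
      have h5 : π (v * m4) = π v := by
        have : v * m4 = v + lam v m4 := mul_eq_add_lam v m4
        rw [this, πadd, πlam v m4 hm4, add_zero]
      rw [h1, h4, sub_eq_add_neg, πadd, πadd, πneg, h5]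
      simp
    have congL : ∀ (v a μ : B), μ ∈ annSeries B k → π ((μ + v) * a) = π (v * a) := by
      intro v a μ hμ
      have : μ + v = v + (-v + μ + v) := by simp [← add_assoc]
      rw [this, congR]
      have := hMn.conj_mem μ hμ (-v)
      simp only [neg_neg] at this; exact this
    -- stability
    have stab : ∀ x ∈ annSeries B (k+1), ∀ x', x' - x ∈ annSeries B k →
        x' ∈ annSeries B (k+1) := by
      intro x hx x' hd
      have hπx : π x' = π x := (hπ _ _).2 hd
      have hx'm : x' = (x' - x) + x := by simp [sub_eq_add_neg, add_assoc]
      have hxm2 : -x + (x' - x) + x ∈ annSeries B k := by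
        have := hMn.conj_mem _ hd (-x); simp only [neg_neg] at this; exact this
      have hx'r : x' = x + (-x + (x' - x) + x) := by
        simp only [← add_assoc]; simp [sub_eq_add_neg, ← add_assoc]
      rw [memIff]
      intro a
      have hL : π (x' * a) = π x + π a := by
        rw [hx'm, congL x a _ hd, fact2 x hx a]
      have hR : π (a * x') = π a + π x := by
        rw [hx'r]
        have : a * (x + (-x + (x' - x) + x)) = a * x - a + a * (-x + (x' - x) + x) :=
          circ_add a x _
        rw [this]
        have h6 : a * (-x + (x' - x) + x) = a + lam a (-x + (x' - x) + x) :=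
          mul_eq_add_lam a _
        rw [h6, sub_eq_add_neg, πadd, πadd, πadd, πlam a _ hxm2, add_zero, πneg,
          fact1 x hx a]
        simp [add_assoc]
      refine ⟨?_, ?_, ?_⟩
      · rw [hL, hR, fact3 x hx a]
      · rw [hL, πadd, hπx]
      · rw [πadd, πadd, hπx, fact3 x hx a]
    -- multiplicative closure
    have mulC : ∀ x ∈ annSeries B (k+1), ∀ y ∈ annSeries B (k+1),
        x * y ∈ annSeries B (k+1) := by
      intro x hx y hy
      have factR : ∀ z, π (z * y) = π z + π y := fun z => fact1 y hy z
      rw [memIff]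
      intro a
      have hL : π ((x * y) * a) = π x + (π y + π a) := by
        rw [mul_assoc, fact2 x hx, fact2 y hy]
      have hR : π (a * (x * y)) = π a + (π x + π y) := by
        rw [← mul_assoc, factR, fact1 x hx, add_assoc]
      have hxy : π (x * y) = π x + π y := fact2 x hx y
      have c3 : ∀ q : Q, π x + q = q + π x := by
        intro q
        induction q using QuotientAddGroup.induction_on with
        | H a => exact fact3 x hx a
      have c3y : ∀ q : Q, π y + q = q + π y := by
        intro q
        induction q using QuotientAddGroup.induction_on with
        | H a => exact fact3 y hy a
      have c3xy : ∀ q : Q, (π x + π y) + q = q + (π x + π y) := by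
        intro q; rw [add_assoc, c3y, ← add_assoc, c3, add_assoc]
      refine ⟨?_, ?_, ?_⟩
      · rw [hL, hR, ← add_assoc, c3xy (π a)]
      · rw [hL, πadd, hxy, add_assoc]
      · rw [πadd, πadd, hxy]
        exact c3xy (π a)
    -- inverse closure
    have invC : ∀ x ∈ annSeries B (k+1), x⁻¹ ∈ annSeries B (k+1) := by
      intro x hx
      have hπinv : π x⁻¹ = -π x := by
        have h1 : π (x * x⁻¹) = π x + π x⁻¹ := fact2 x hx x⁻¹
        rw [mul_inv_cancel, one_eq_zero] at h1
        have : (0 : Q) = π x + π x⁻¹ := h1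
        have := congrArg (fun q => -π x + q) this
        simpa [← add_assoc] using this.symm
      have c3 : ∀ q : Q, π x + q = q + π x := by
        intro q
        induction q using QuotientAddGroup.induction_on with
        | H a => exact fact3 x hx a
      have c3' : ∀ q : Q, π x⁻¹ + q = q + π x⁻¹ := by
        intro q; rw [hπinv]
        calc -π x + q = -π x + (q + (π x + -π x)) := by simp
          _ = -π x + (q + π x) + -π x := by simp [add_assoc]
          _ = -π x + (π x + q) + -π x := by rw [c3 q]
          _ = q + -π x := by simp [add_assoc]
      rw [memIff]
      intro a
      have hL : π (x⁻¹ * a) = π x⁻¹ + π a := by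
        have h1 : π (x * (x⁻¹ * a)) = π x + π (x⁻¹ * a) := fact2 x hx _
        rw [← mul_assoc, mul_inv_cancel, one_eq_zero, zero_mul'] at h1
        have := congrArg (fun q => -π x + q) h1
        simp only [← add_assoc] at this
        simp only [neg_add_cancel, zero_add] at this
        rw [← this, hπinv]
      have hR : π (a * x⁻¹) = π a + π x⁻¹ := by
        have h1 : π ((a * x⁻¹) * x) = π (a * x⁻¹) + π x := fact1 x hx _
        rw [mul_assoc, inv_mul_cancel, one_eq_zero, mul_zero'] at h1
        have := congrArg (fun q => q + -π x) h1
        simp only [add_assoc, add_neg_cancel, add_zero] at this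
        rw [hπinv]
        exact this.symm
      refine ⟨?_, ?_, ?_⟩
      · rw [hL, hR, c3' (π a)]
      · rw [hL, πadd]
      · rw [πadd, πadd, c3' (π a)]
    -- now all the closure properties of annSeries B (k+1)
    have zeroC : (0 : B) ∈ annSeries B (k+1) := by
      intro a
      simp only [zero_mul', mul_zero', zero_add, add_zero, sub_self]
      exact ⟨ih.zero, ih.zero, ih.zero⟩
    have addC : ∀ x ∈ annSeries B (k+1), ∀ y ∈ annSeries B (k+1),
        x + y ∈ annSeries B (k+1) := by
      intro x hx y hy
      refine stab (x * y) (mulC x hx y hy) (x + y) ?_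
      rw [← hπ]
      show π (x + y) = π (x * y)
      rw [πadd, fact2 x hx y]
    have negC : ∀ x ∈ annSeries B (k+1), -x ∈ annSeries B (k+1) := by
      intro x hx
      refine stab x⁻¹ (invC x hx) (-x) ?_
      rw [← hπ]
      show π (-x) = π x⁻¹
      rw [πneg]
      have h1 : π (x * x⁻¹) = π x + π x⁻¹ := fact2 x hx x⁻¹
      rw [mul_inv_cancel, one_eq_zero] at h1
      have := congrArg (fun q => -π x + q) h1
      have hz : π (0:B) = 0 := rfl
      simpa [← add_assoc, hz] using this
    have conjC : ∀ (a : B), ∀ x ∈ annSeries B (k+1), a + x + -a ∈ annSeries B (k+1) := by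
      intro a x hx
      refine stab x hx _ ?_
      rw [← hπ]
      show π (a + x + -a) = π x
      rw [πadd, πadd, πneg, ← fact3 x hx a]
      simp [add_assoc]
    have lamC : ∀ (a : B), ∀ x ∈ annSeries B (k+1), lam a x ∈ annSeries B (k+1) := by
      intro a x hx
      refine stab x hx _ ?_
      rw [← hπ]
      show π (lam a x) = π x
      show π (-a + a * x) = π x
      rw [πadd, πneg, fact1 x hx a, ← add_assoc]
      simp
    exact ⟨zeroC, fun x hx y hy => addC x hx y hy, fun x hx => negC x hx,
      fun a m hm => conjC a m hm, fun a m hm => lamC a m hm⟩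

/-- The annihilator series terms as additive subgroups. -/
def annAdd (B : Type*) [SkewBrace B] (k : ℕ) : AddSubgroup B :=
  { carrier := annSeries B k
    add_mem' := fun hx hy => (annGood k).add _ hx _ hy
    zero_mem' := (annGood k).zero
    neg_mem' := fun hx => (annGood k).neg _ hx }

theorem mem_annAdd {k : ℕ} {x : B} : x ∈ annAdd B k ↔ x ∈ annSeries B k := Iff.rfl

instance annAdd_normal (k : ℕ) : (annAdd B k).Normal :=
  ⟨fun m hm a => (annGood k).conj a m hm⟩

/-- The drop lemma: star products and commutators with one entry in
`Ann_{k+1}` land in `Ann_k`. -/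
theorem ann_drop {k : ℕ} {x : B} (hx : x ∈ annSeries B (k+1)) (a : B) :
    starOp a x ∈ annSeries B k ∧ starOp x a ∈ annSeries B k ∧
    a + x + -a + -x ∈ annSeries B k ∧ x + a + -x + -a ∈ annSeries B k := by
  let M := annAdd B k
  let π : B → B ⧸ M := QuotientAddGroup.mk
  have hπ0 : ∀ u : B, π u = 0 ↔ u ∈ annSeries B k := fun u =>
    QuotientAddGroup.eq_zero_iff u
  have hπ : ∀ u v : B, π u = π v ↔ u - v ∈ annSeries B k := fun u v =>
    QuotientAddGroup.eq_iff_sub_mem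
  have πadd : ∀ u v : B, π (u + v) = π u + π v := fun u v => rfl
  have πneg : ∀ u : B, π (-u) = -π u := fun u => rfl
  have fact2 : ∀ a, π (x * a) = π x + π a := by
    intro a
    have := (hπ _ _).2 ((hx a).2.1)
    rw [this]; rfl
  have fact3 : ∀ a, π x + π a = π a + π x := fun a => (hπ _ _).2 ((hx a).2.2)
  have fact1 : ∀ a, π (a * x) = π a + π x := by
    intro a
    have h1 := (hπ _ _).2 ((hx a).1)
    rw [← h1, fact2 a, fact3 a]
  refine ⟨?_, ?_, ?_, ?_⟩
  · rw [← hπ0]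
    show π (-a + a * x - x) = 0
    rw [sub_eq_add_neg, πadd, πadd, πneg, πneg, fact1 a]
    simp [← add_assoc, add_assoc]
  · rw [← hπ0]
    show π (-x + x * a - a) = 0
    rw [sub_eq_add_neg, πadd, πadd, πneg, πneg, fact2 a]
    simp [← add_assoc, add_assoc]
  · rw [← hπ0, πadd, πadd, πadd, πneg, πneg, ← fact3 a]
    simp [← add_assoc, add_assoc]
  · rw [← hπ0, πadd, πadd, πadd, πneg, πneg, fact3 a]
    simp [← add_assoc, add_assoc]

/-- The strong series `Γ_[n+1]` as additive subgroups. -/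
def gSeries (B : Type*) [SkewBrace B] : ℕ → AddSubgroup B
  | 0 => ⊤
  | n + 1 => AddSubgroup.closure {z : B | ∃ i : Fin (n + 1),
      ∃ x ∈ gSeries B i.1, ∃ y ∈ gSeries B (n - i.1),
        z = starOp x y ∨ z = x + y + -x + -y}
  decreasing_by
  · exact i.isLt
  · omega

theorem gSeries_succ (n : ℕ) : gSeries B (n+1) = AddSubgroup.closure {z : B | ∃ i : Fin (n + 1),
    ∃ x ∈ gSeries B i.1, ∃ y ∈ gSeries B (n - i.1),
      z = starOp x y ∨ z = x + y + -x + -y} := by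
  rw [gSeries]

theorem star_mem_g {i j : ℕ} {x y : B} (hx : x ∈ gSeries B i) (hy : y ∈ gSeries B j) :
    starOp x y ∈ gSeries B (i + j + 1) := by
  rw [gSeries_succ]
  apply AddSubgroup.subset_closure
  refine ⟨⟨i, by omega⟩, x, hx, y, ?_, Or.inl rfl⟩
  simpa using hy

theorem comm_mem_g {i j : ℕ} {x y : B} (hx : x ∈ gSeries B i) (hy : y ∈ gSeries B j) :
    x + y + -x + -y ∈ gSeries B (i + j + 1) := by
  rw [gSeries_succ]
  apply AddSubgroup.subset_closure
  refine ⟨⟨i, by omega⟩, x, hx, y, ?_, Or.inr rfl⟩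
  simpa using hy

theorem g_succ_le : ∀ n, gSeries B (n+1) ≤ gSeries B n := by
  intro n
  induction n using Nat.strong_induction_on with
  | _ n ih =>
    match n with
    | 0 =>
      have h0 : gSeries B 0 = ⊤ := by rw [gSeries]
      rw [h0]; exact le_top
    | (m+1) =>
      rw [gSeries_succ (m+1)]
      rw [AddSubgroup.closure_le]
      rintro z ⟨i, x, hx, y, hy, h⟩
      rcases i with ⟨iv, hiv⟩
      match iv, hiv with
      | 0, _ =>
        simp only [Nat.sub_zero] at hy
        have hy' : y ∈ gSeries B m := ih m (by omega) hy
        rw [gSeries_succ m]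
        apply AddSubgroup.subset_closure
        exact ⟨⟨0, by omega⟩, x, hx, y, by simpa using hy', h⟩
      | (s+1), hiv =>
        have hx' : x ∈ gSeries B s := ih s (by omega) hx
        have hy' : y ∈ gSeries B (m - s) := by
          have : m + 1 - (s + 1) = m - s := by omega
          rwa [this] at hy
        rw [gSeries_succ m]
        apply AddSubgroup.subset_closure
        exact ⟨⟨s, by omega⟩, x, hx', y, hy', h⟩

theorem g_le {i j : ℕ} (h : i ≤ j) : gSeries B j ≤ gSeries B i := by
  induction j with
  | zero => simp_all
  | succ n ih =>
    rcases Nat.lt_or_ge i (n+1) with h' | h'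
    · exact le_trans (g_succ_le n) (ih (by omega))
    · have : i = n + 1 := by omega
      subst this; exact le_rfl

theorem g_zero : gSeries B 0 = ⊤ := by rw [gSeries]

theorem mem_g_zero (x : B) : x ∈ gSeries B 0 := by rw [g_zero]; trivial

theorem star_right_g {n : ℕ} {y : B} (a : B) (hy : y ∈ gSeries B n) :
    starOp a y ∈ gSeries B (n + 1) := by
  have := star_mem_g (mem_g_zero a) hy
  simpa using this

theorem star_left_g {n : ℕ} {x : B} (hx : x ∈ gSeries B n) (a : B) :
    starOp x a ∈ gSeries B (n + 1) :=
  star_mem_g hx (mem_g_zero a)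

theorem comm_right_g {n : ℕ} {y : B} (a : B) (hy : y ∈ gSeries B n) :
    a + y + -a + -y ∈ gSeries B (n + 1) := by
  have := comm_mem_g (mem_g_zero a) hy
  simpa using this

theorem comm_left_g {n : ℕ} {x : B} (hx : x ∈ gSeries B n) (a : B) :
    x + a + -x + -a ∈ gSeries B (n + 1) :=
  comm_mem_g hx (mem_g_zero a)

theorem g_normal (n : ℕ) : (gSeries B n).Normal := by
  constructor
  intro z hz a
  have h1 : a + z + -a + -z ∈ gSeries B n := g_succ_le n (comm_right_g a hz)
  have : a + z + -a = (a + z + -a + -z) + z := by simp [add_assoc]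
  rw [this]
  exact (gSeries B n).add_mem h1 hz

theorem lam_g {n : ℕ} (a : B) {y : B} (hy : y ∈ gSeries B n) : lam a y ∈ gSeries B n := by
  rw [lam_eq_star_add]
  exact (gSeries B n).add_mem (g_succ_le n (star_right_g a hy)) hy

theorem mul_g {n : ℕ} {u v : B} (hu : u ∈ gSeries B n) (hv : v ∈ gSeries B n) :
    u * v ∈ gSeries B n := by
  rw [mul_eq]
  exact (gSeries B n).add_mem ((gSeries B n).add_mem hu (g_succ_le n (star_right_g u hv))) hv

theorem inv_g {n : ℕ} {u : B} (hu : u ∈ gSeries B n) : u⁻¹ ∈ gSeries B n := by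
  rw [inv_eq', sub_eq_add_neg]
  exact (gSeries B n).add_mem ((gSeries B n).neg_mem hu)
    ((gSeries B n).neg_mem (g_succ_le n (star_right_g u⁻¹ hu)))

theorem g_vanish (hann : AnnNilpotent B) : ∃ m : ℕ, ∀ x ∈ gSeries B m, x = (0:B) := by
  obtain ⟨N, hN⟩ := hann
  have claim : ∀ p, p ≤ N → ∀ n, 2^p ≤ n + 1 → (gSeries B n : Set B) ⊆ annSeries B (N - p) := by
    intro p
    induction p with
    | zero =>
      intro _ n _
      simp only [Nat.sub_zero, hN]
      exact fun x _ => trivial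
    | succ p ih =>
      intro hpN n h2
      have hn : 1 ≤ n := by
        have : 2 ≤ 2^(p+1) := by
          have : (2:ℕ)^1 ≤ 2^(p+1) := Nat.pow_le_pow_right (by norm_num) (by omega)
          simpa using this
        omega
      obtain ⟨m, rfl⟩ : ∃ m, n = m + 1 := ⟨n - 1, by omega⟩
      intro z hz
      have hsub : gSeries B (m+1) ≤ annAdd B (N - (p+1)) := by
        rw [gSeries_succ]
        rw [AddSubgroup.closure_le]
        rintro w ⟨⟨iv, hiv⟩, x, hx, y, hy, h⟩
        have hpow : 2^p + 2^p = 2^(p+1) := by rw [pow_succ]; omega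
        have hNq : N - p = (N - (p+1)) + 1 := by omega
        have hcases : 2^p ≤ iv + 1 ∨ 2^p ≤ (m - iv) + 1 := by omega
        rcases hcases with hc | hc
        · have hxA : x ∈ annSeries B ((N - (p+1)) + 1) := by
            rw [← hNq]; exact ih (by omega) iv hc hx
          rcases h with rfl | rfl
          · exact (ann_drop hxA y).2.1
          · exact (ann_drop hxA y).2.2.2
        · have hyA : y ∈ annSeries B ((N - (p+1)) + 1) := by
            rw [← hNq]; exact ih (by omega) (m - iv) hc hy
          rcases h with rfl | rfl
          · exact (ann_drop hyA x).1
          · exact (ann_drop hyA x).2.2.1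
      exact hsub hz
  refine ⟨2^N - 1, ?_⟩
  intro x hx
  have h1 : 2^N ≤ (2^N - 1) + 1 := by
    have : 1 ≤ 2^N := Nat.one_le_two_pow
    omega
  have := claim N le_rfl (2^N - 1) h1 hx
  simpa [annSeries] using this

theorem mem_sup_normal {K N : AddSubgroup B} (hN : N.Normal) {x : B} (hx : x ∈ K ⊔ N) :
    ∃ k ∈ K, ∃ g ∈ N, x = k + g := by
  let P : AddSubgroup B :=
    { carrier := {x | ∃ k ∈ K, ∃ g ∈ N, x = k + g}
      zero_mem' := ⟨0, K.zero_mem, 0, N.zero_mem, by simp⟩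
      add_mem' := by
        rintro a b ⟨k, hk, g, hg, rfl⟩ ⟨k', hk', g', hg', rfl⟩
        refine ⟨k + k', K.add_mem hk hk', -k' + g + k' + g', N.add_mem ?_ hg', ?_⟩
        · have := hN.conj_mem g hg (-k')
          simpa [add_assoc] using this
        · simp [add_assoc]
      neg_mem' := by
        rintro a ⟨k, hk, g, hg, rfl⟩
        refine ⟨-k, K.neg_mem hk, k + -g + -k, ?_, ?_⟩
        · have := hN.conj_mem (-g) (N.neg_mem hg) k
          simpa [add_assoc] using this
        · simp [add_assoc] }
  have h1 : K ⊔ N ≤ P := by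
    apply sup_le
    · intro a ha; exact ⟨a, ha, 0, N.zero_mem, by simp⟩
    · intro a ha; exact ⟨0, K.zero_mem, a, ha, by simp⟩
  exact h1 hx

/-- `∘`-conjugates preserve the series. -/
theorem conj_mul_g {m : ℕ} (a : B) {g : B} (hg : g ∈ gSeries B m) :
    a * g * a⁻¹ ∈ gSeries B m := by
  set d := starOp g a⁻¹ with hd
  have hdm : d ∈ gSeries B (m+1) := star_left_g hg a⁻¹
  have key : a * g * a⁻¹ = (a + lam a g + -a) + (a + lam a d + -a) := by
    have e1 : a * g * a⁻¹ = a * (g + (d + a⁻¹)) := by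
      rw [mul_assoc, mul_eq_add_lam g a⁻¹, lam_eq_star_add]
    rw [e1, circ_add a g (d + a⁻¹), circ_add a d a⁻¹, mul_inv_cancel, one_eq_zero,
      mul_eq_add_lam a g, mul_eq_add_lam a d]
    simp [sub_eq_add_neg, add_assoc]
  rw [key]
  exact (gSeries B m).add_mem
    ((g_normal m).conj_mem _ (lam_g a hg) a)
    ((g_normal m).conj_mem _ (g_succ_le m (lam_g a hdm)) a)

theorem closure_le_g {k : ℕ} {T : Set B} (hT : T ⊆ (gSeries B k : Set B)) :
    ∀ h ∈ Subgroup.closure T, h ∈ gSeries B k := by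
  intro h hh
  induction hh using Subgroup.closure_induction with
  | mem t ht => exact hT ht
  | one => rw [one_eq_zero]; exact (gSeries B k).zero_mem
  | mul x y hx hy ihx ihy => exact mul_g ihx ihy
  | inv x hx ihx => exact inv_g ihx

/-- additive words over `T ⊆ Γₖ` can be written as `h ∘ g` with `h` a
`∘`-word over `T` and `g ∈ Γ_{k+1}`. -/
theorem conv {k : ℕ} {T : Set B} (hT : T ⊆ (gSeries B k : Set B)) :
    ∀ s ∈ AddSubgroup.closure T, ∃ h ∈ Subgroup.closure T, ∃ g ∈ gSeries B (k+1), s = h * g := by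
  intro s hs
  induction hs using AddSubgroup.closure_induction with
  | mem t ht =>
    exact ⟨t, Subgroup.subset_closure ht, 0, (gSeries B (k+1)).zero_mem, (mul_zero' t).symm⟩
  | zero => exact ⟨1, Subgroup.one_mem _, 0, (gSeries B (k+1)).zero_mem, by simp [mul_zero', one_eq_zero]⟩
  | add x y hx hy ihx ihy =>
    obtain ⟨h, hh, g, hg, rfl⟩ := ihx
    obtain ⟨h', hh', g', hg', rfl⟩ := ihy
    have hhG : h ∈ gSeries B k := closure_le_g hT h hh
    have hh'G : h' ∈ gSeries B k := closure_le_g hT h' hh'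
    -- z = lam (h*g)⁻¹ (h' * g') = h' + c with c ∈ Γ_{k+1}
    set w := (h * g)⁻¹ with hw
    have e1 : h' * g' = h' + lam h' g' := mul_eq_add_lam h' g'
    have e2 : lam w (h' * g') = (starOp w h' + h') + lam w (lam h' g') := by
      rw [e1, lam_add, lam_eq_star_add]
    set c : B := (-h' + starOp w h' + h') + lam w (lam h' g') with hc
    have hcG : c ∈ gSeries B (k+1) := by
      refine (gSeries B (k+1)).add_mem ?_ (lam_g w (lam_g h' hg'))
      have := (g_normal (k+1)).conj_mem _ (star_right_g w hh'G) (-h')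
      simpa [add_assoc] using this
    have e3 : lam w (h' * g') = h' + c := by
      rw [e2, hc]
      simp [add_assoc]
    have e4 : h' + c = h' * (lam h'⁻¹ c) := (mul_lam_inv h' c).symm
    have e5 : (h * g) + (h' * g') = (h * g) * (lam w (h' * g')) := by
      rw [hw, mul_lam_inv]
    refine ⟨h * h', Subgroup.mul_mem _ hh hh',
      (h'⁻¹ * g * h') * (lam h'⁻¹ c), ?_, ?_⟩
    · refine mul_g ?_ (lam_g h'⁻¹ hcG)
      have := conj_mul_g h'⁻¹ hg
      simpa using this
    · rw [e5, e3, e4]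
      group
  | neg x hx ihx =>
    obtain ⟨h, hh, g, hg, rfl⟩ := ihx
    set g3 := lam h g with hg3
    have hg3G : g3 ∈ gSeries B (k+1) := lam_g h hg
    have hhG : h ∈ gSeries B k := closure_le_g hT h hh
    set s4 := starOp h⁻¹ h with hs4
    have hs4G : s4 ∈ gSeries B (k+1) := star_right_g h⁻¹ hhG
    set w : B := -h⁻¹ + -g3 + h⁻¹ + s4 with hww
    have hwG : w ∈ gSeries B (k+1) := by
      refine (gSeries B (k+1)).add_mem ?_ hs4G
      have := (g_normal (k+1)).conj_mem _ ((gSeries B (k+1)).neg_mem hg3G) (-h⁻¹)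
      simpa [add_assoc] using this
    refine ⟨h⁻¹, Subgroup.inv_mem _ hh, lam h w, lam_g h hwG, ?_⟩
    have e6 : h⁻¹ * lam h w = h⁻¹ + w := by
      have := mul_lam_inv h⁻¹ w
      rwa [inv_inv] at this
    rw [e6, hww]
    have e7 : -(h * g) = -g3 + -h := by
      rw [mul_eq_add_lam h g, ← hg3, neg_add_rev]
    have e8 : -h = h⁻¹ + s4 := neg_eq' h
    rw [e7, e8]
    simp [add_assoc]

theorem mult_decomp {i : ℕ} {Ti : Set B} (hTi : Ti ⊆ (gSeries B i : Set B))
    {x : B} (hx : x ∈ AddSubgroup.closure Ti ⊔ gSeries B (i+1)) :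
    ∃ h ∈ Subgroup.closure Ti, ∃ g ∈ gSeries B (i+1), x = h * g := by
  obtain ⟨s, hs, g, hg, rfl⟩ := mem_sup_normal (g_normal (i+1)) hx
  obtain ⟨h, hh, g1, hg1, rfl⟩ := conv hTi s hs
  refine ⟨h, hh, g1 * lam (h * g1)⁻¹ g, mul_g hg1 (lam_g _ hg), ?_⟩
  rw [← mul_assoc, mul_lam_inv]

/-- generators for the next stage -/
def starComms (Ti Tj : Set B) : Set B :=
  {z : B | ∃ u ∈ Ti, ∃ v ∈ Tj, z = starOp u v ∨ z = u + v + -u + -v}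

theorem reduce {i j : ℕ} {Ti Tj : Set B}
    (hTi : Ti ⊆ (gSeries B i : Set B)) (hTj : Tj ⊆ (gSeries B j : Set B))
    (hdi : gSeries B i ≤ AddSubgroup.closure Ti ⊔ gSeries B (i+1))
    (hdj : gSeries B j ≤ AddSubgroup.closure Tj ⊔ gSeries B (j+1))
    {x y : B} (hx : x ∈ gSeries B i) (hy : y ∈ gSeries B j) :
    starOp x y ∈ AddSubgroup.closure (starComms Ti Tj) ⊔ gSeries B (i+j+2) ∧
    x + y + -x + -y ∈ AddSubgroup.closure (starComms Ti Tj) ⊔ gSeries B (i+j+2) := by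
  set D := AddSubgroup.closure (starComms Ti Tj) ⊔ gSeries B (i+j+2) with hD
  have hG2D : gSeries B (i+j+2) ≤ D := le_sup_right
  have hSCD : starComms Ti Tj ⊆ (D : Set B) := fun z hz =>
    (le_sup_left : AddSubgroup.closure (starComms Ti Tj) ≤ D)
      (AddSubgroup.subset_closure hz)
  have hclTj : AddSubgroup.closure Tj ≤ gSeries B j := (AddSubgroup.closure_le _).2 hTj
  have hclTi : AddSubgroup.closure Ti ≤ gSeries B i := (AddSubgroup.closure_le _).2 hTi
  have hmTi : ∀ h ∈ Subgroup.closure Ti, h ∈ gSeries B i := closure_le_g hTi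
  have conjD : ∀ s v : B, s ∈ gSeries B (i+j+1) → s ∈ D → v + s + -v ∈ D := by
    intro s v hs hsD
    have hc : -s + v + s + -v ∈ gSeries B (i+j+2) := by
      have := comm_mem_g ((gSeries B (i+j+1)).neg_mem hs) (mem_g_zero v)
      simpa using this
    have e : v + s + -v = s + (-s + v + s + -v) := by simp [add_assoc]
    rw [e]; exact D.add_mem hsD (hG2D hc)
  constructor
  · -- star part
    have starGen : ∀ t ∈ Tj, starOp x t ∈ D := by
      intro t ht
      obtain ⟨h, hh, g, hg, hx'⟩ := mult_decomp hTi (hdi hx)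
      have main : ∀ h' ∈ Subgroup.closure Ti, starOp h' t ∈ D := by
        intro h' hh'
        induction hh' using Subgroup.closure_induction with
        | mem u hu => exact hSCD ⟨u, hu, t, ht, Or.inl rfl⟩
        | one => rw [one_eq_zero, star_zero_left]; exact D.zero_mem
        | mul a b ha hb iha ihb =>
          have e2 := star_mul_left a b t
          have c1 : starOp a (starOp b t) ∈ gSeries B (i+j+2) :=
            g_le (by omega) (star_mem_g (hmTi a ha) (star_mem_g (hmTi b hb) (hTj ht)))
          rw [e2]; exact D.add_mem (D.add_mem (hG2D c1) ihb) iha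
        | inv a ha iha =>
          have e2 := star_mul_left a a⁻¹ t
          rw [mul_inv_cancel, one_eq_zero, star_zero_left] at e2
          have c1 : starOp a (starOp a⁻¹ t) ∈ gSeries B (i+j+2) :=
            g_le (by omega) (star_mem_g (hmTi a ha)
              (star_mem_g (inv_g (hmTi a ha)) (hTj ht)))
          have e3 : starOp a⁻¹ t = -(starOp a (starOp a⁻¹ t)) + -(starOp a t) := by
            have h4 := congrArg
              (fun z => -(starOp a (starOp a⁻¹ t)) + z + -(starOp a t)) e2.symm
            simpa [add_assoc] using h4
          rw [e3]; exact D.add_mem (D.neg_mem (hG2D c1)) (D.neg_mem iha)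
      have c2 : starOp g t ∈ gSeries B (i+j+2) :=
        g_le (by omega) (star_mem_g hg (hTj ht))
      have c3 : starOp h (starOp g t) ∈ gSeries B (i+j+2) :=
        g_le (by omega) (star_mem_g (hmTi h hh) (star_mem_g hg (hTj ht)))
      rw [hx', star_mul_left]
      exact D.add_mem (D.add_mem (hG2D c3) (hG2D c2)) (main h hh)
    have starClo : ∀ v ∈ AddSubgroup.closure Tj, starOp x v ∈ D := by
      intro v hv
      induction hv using AddSubgroup.closure_induction with
      | mem t ht => exact starGen t ht
      | zero => rw [star_zero_right]; exact D.zero_mem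
      | add v v' hvc hv'c ihv ihv' =>
        have e := star_add_right x v v'
        have hs' : starOp x v' ∈ gSeries B (i+j+1) := star_mem_g hx (hclTj hv'c)
        have hconj : v + starOp x v' + -v ∈ D := conjD _ v hs' ihv'
        rw [e, sub_eq_add_neg]
        exact D.add_mem ihv hconj
      | neg v hvc ihv =>
        have e := star_neg_right x v
        have hsG : starOp x v ∈ gSeries B (i+j+1) := star_mem_g hx (hclTj hvc)
        have hc : starOp x v + -v + -(starOp x v) + v ∈ gSeries B (i+j+2) := by
          have := comm_mem_g hsG ((gSeries B j).neg_mem (hclTj hvc))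
          have h2 := g_le (show i+j+2 ≤ (i+j+1)+j+1 by omega) this
          simpa using h2
        have e2 : -v - starOp x v + v =
            -(starOp x v) + (starOp x v + -v + -(starOp x v) + v) := by
          simp [sub_eq_add_neg, add_assoc]
        rw [e, e2]
        exact D.add_mem (D.neg_mem ihv) (hG2D hc)
    obtain ⟨v, hvc, g, hg, hyeq⟩ := mem_sup_normal (g_normal (j+1)) (hdj hy)
    have e := star_add_right x v g
    have hsg : starOp x g ∈ gSeries B (i+j+2) :=
      g_le (by omega) (star_mem_g hx hg)
    have hconj : v + starOp x g + -v ∈ gSeries B (i+j+2) :=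
      (g_normal _).conj_mem _ hsg v
    rw [hyeq, e, sub_eq_add_neg]
    exact D.add_mem (starClo v hvc) (hG2D hconj)
  · -- commutator part
    have commGen : ∀ t ∈ Tj, ∀ s ∈ AddSubgroup.closure Ti, s + t + -s + -t ∈ D := by
      intro t ht s hs
      induction hs using AddSubgroup.closure_induction with
      | mem u hu => exact hSCD ⟨u, hu, t, ht, Or.inr rfl⟩
      | zero => simpa using D.zero_mem
      | add s s' hsc hs'c ihs ihs' =>
        have hcG : s' + t + -s' + -t ∈ gSeries B (i+j+1) :=
          comm_mem_g (hclTi hs'c) (hTj ht)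
        have e : (s + s') + t + -(s + s') + -t =
            (s + (s' + t + -s' + -t) + -s) + (s + t + -s + -t) := by
          simp [add_assoc, neg_add_rev]
        rw [e]
        exact D.add_mem (conjD _ s hcG ihs') ihs
      | neg s hsc ihs =>
        have hcG : s + t + -s + -t ∈ gSeries B (i+j+1) :=
          comm_mem_g (hclTi hsc) (hTj ht)
        have hc2 : (s + t + -s + -t) + -s + -(s + t + -s + -t) + s ∈
            gSeries B (i+j+2) := by
          have := comm_mem_g hcG ((gSeries B i).neg_mem (hclTi hsc))
          have h2 := g_le (show i+j+2 ≤ (i+j+1)+i+1 by omega) this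
          simpa using h2
        have e : (-s) + t + -(-s) + -t =
            -(s + t + -s + -t) + ((s + t + -s + -t) + -s + -(s + t + -s + -t) + s) := by
          simp [add_assoc, neg_add_rev]
        rw [e]
        exact D.add_mem (D.neg_mem ihs) (hG2D hc2)
    have commClo : ∀ v ∈ AddSubgroup.closure Tj, x + v + -x + -v ∈ D := by
      intro v hv
      induction hv using AddSubgroup.closure_induction with
      | mem t ht =>
        obtain ⟨s, hsc, g, hg, hxeq⟩ := mem_sup_normal (g_normal (i+1)) (hdi hx)
        have hcG : g + t + -g + -t ∈ gSeries B (i+j+2) :=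
          g_le (by omega) (comm_mem_g hg (hTj ht))
        have hconj : s + (g + t + -g + -t) + -s ∈ gSeries B (i+j+2) :=
          (g_normal _).conj_mem _ hcG s
        have e : (s + g) + t + -(s + g) + -t =
            (s + (g + t + -g + -t) + -s) + (s + t + -s + -t) := by
          simp [add_assoc, neg_add_rev]
        rw [hxeq, e]
        exact D.add_mem (hG2D hconj) (commGen t ht s hsc)
      | zero => simpa using D.zero_mem
      | add v v' hvc hv'c ihv ihv' =>
        have hcG : x + v' + -x + -v' ∈ gSeries B (i+j+1) :=
          comm_mem_g hx (hclTj hv'c)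
        have e : x + (v + v') + -x + -(v + v') =
            (x + v + -x + -v) + (v + (x + v' + -x + -v') + -v) := by
          simp [add_assoc, neg_add_rev]
        rw [e]
        exact D.add_mem ihv (conjD _ v hcG ihv')
      | neg v hvc ihv =>
        have hcG : x + v + -x + -v ∈ gSeries B (i+j+1) :=
          comm_mem_g hx (hclTj hvc)
        have hc2 : (x + v + -x + -v) + -v + -(x + v + -x + -v) + v ∈
            gSeries B (i+j+2) := by
          have := comm_mem_g hcG ((gSeries B j).neg_mem (hclTj hvc))
          have h2 := g_le (show i+j+2 ≤ (i+j+1)+j+1 by omega) this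
          simpa using h2
        have e : x + (-v) + -x + -(-v) =
            -(x + v + -x + -v) + ((x + v + -x + -v) + -v + -(x + v + -x + -v) + v) := by
          simp [add_assoc, neg_add_rev]
        rw [e]
        exact D.add_mem (D.neg_mem ihv) (hG2D hc2)
    obtain ⟨v, hvc, g, hg, hyeq⟩ := mem_sup_normal (g_normal (j+1)) (hdj hy)
    have hcG : x + g + -x + -g ∈ gSeries B (i+j+2) :=
      g_le (by omega) (comm_mem_g hx hg)
    have hconj : v + (x + g + -x + -g) + -v ∈ gSeries B (i+j+2) :=
      (g_normal _).conj_mem _ hcG v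
    have e : x + (v + g) + -x + -(v + g) =
        (x + v + -x + -v) + (v + (x + g + -x + -g) + -v) := by
      simp [add_assoc, neg_add_rev]
    rw [hyeq, e]
    exact D.add_mem (commClo v hvc) (hG2D hconj)

theorem starComms_finite {Ti Tj : Set B} (hi : Ti.Finite) (hj : Tj.Finite) :
    (starComms Ti Tj).Finite := by
  have hsub : starComms Ti Tj ⊆
      ((fun p : B × B => starOp p.1 p.2) '' (Ti ×ˢ Tj)) ∪
      ((fun p : B × B => p.1 + p.2 + -p.1 + -p.2) '' (Ti ×ˢ Tj)) := by
    rintro z ⟨u, hu, v, hv, h | h⟩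
    · exact Or.inl ⟨(u, v), ⟨hu, hv⟩, h.symm⟩
    · exact Or.inr ⟨(u, v), ⟨hu, hv⟩, h.symm⟩
  exact Set.Finite.subset (Set.Finite.union ((hi.prod hj).image _) ((hi.prod hj).image _)) hsub

theorem sbfg_base {S : Set B}
    (hgen : ∀ T : Set B, IsSubSkewBrace T → S ⊆ T → T = Set.univ) :
    gSeries B 0 ≤ AddSubgroup.closure S ⊔ gSeries B 1 := by
  set K := AddSubgroup.closure S ⊔ gSeries B 1 with hKdef
  have hG1K : gSeries B 1 ≤ K := le_sup_right
  have hK : IsSubSkewBrace (K : Set B) := by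
    refine ⟨K.zero_mem, fun a ha b hb => K.add_mem ha hb, fun a ha => K.neg_mem ha,
      ?_, ?_⟩
    · intro a ha b hb
      rw [mul_eq]
      exact K.add_mem (K.add_mem ha (hG1K (star_right_g a (mem_g_zero b)))) hb
    · intro a ha
      rw [inv_eq', sub_eq_add_neg]
      exact K.add_mem (K.neg_mem ha) (K.neg_mem (hG1K (star_right_g a⁻¹ (mem_g_zero a))))
  have hST : S ⊆ (K : Set B) := fun s hs =>
    (le_sup_left : AddSubgroup.closure S ≤ K) (AddSubgroup.subset_closure hs)
  have huniv := hgen _ hK hST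
  intro x _
  have hx : x ∈ (K : Set B) := by rw [huniv]; trivial
  exact hx

theorem chain {S : Set B} (hfin : S.Finite)
    (hgen : ∀ T : Set B, IsSubSkewBrace T → S ⊆ T → T = Set.univ) :
    ∀ k : ℕ, ∃ T : ℕ → Set B, ∀ i, i ≤ k → (T i).Finite ∧
      T i ⊆ (gSeries B i : Set B) ∧
      gSeries B i ≤ AddSubgroup.closure (T i) ⊔ gSeries B (i+1) := by
  intro k
  induction k with
  | zero =>
    refine ⟨fun _ => S, ?_⟩
    intro i hi
    have : i = 0 := Nat.le_zero.1 hi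
    subst this
    exact ⟨hfin, fun x _ => mem_g_zero x, sbfg_base hgen⟩
  | succ k ih =>
    obtain ⟨T, hT⟩ := ih
    set NT : Set B := ⋃ (i : Fin (k+1)), starComms (T i.1) (T (k - i.1)) with hNT
    refine ⟨fun n => if n = k + 1 then NT else T n, ?_⟩
    intro i hi
    by_cases hik : i = k + 1
    · subst hik
      simp only [if_pos]
      refine ⟨?_, ?_, ?_⟩
      · apply Set.finite_iUnion
        intro ⟨iv, hiv⟩
        exact starComms_finite (hT iv (by omega)).1 (hT (k - iv) (by omega)).1
      · intro z hz
        rw [Set.mem_iUnion] at hz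
        obtain ⟨⟨iv, hiv⟩, u, hu, v, hv, h | h⟩ := hz
        · have := star_mem_g ((hT iv (by omega)).2.1 hu) ((hT (k - iv) (by omega)).2.1 hv)
          have hidx : iv + (k - iv) + 1 = k + 1 := by omega
          rw [hidx] at this
          exact h ▸ this
        · have := comm_mem_g ((hT iv (by omega)).2.1 hu) ((hT (k - iv) (by omega)).2.1 hv)
          have hidx : iv + (k - iv) + 1 = k + 1 := by omega
          rw [hidx] at this
          exact h ▸ this
      · rw [gSeries_succ k, AddSubgroup.closure_le]
        rintro z ⟨⟨iv, hiv⟩, x, hx, y, hy, h⟩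
        have h1 := reduce (hT iv (by omega)).2.1 (hT (k - iv) (by omega)).2.1
          (hT iv (by omega)).2.2 (hT (k - iv) (by omega)).2.2 hx hy
        have hidx : iv + (k - iv) + 2 = k + 2 := by omega
        have hmono : AddSubgroup.closure (starComms (T iv) (T (k - iv))) ⊔
            gSeries B (iv + (k - iv) + 2) ≤ AddSubgroup.closure NT ⊔ gSeries B (k+2) := by
          rw [hidx]
          exact sup_le_sup_right (AddSubgroup.closure_mono
            (Set.subset_iUnion
              (fun (i : Fin (k+1)) => starComms (T i.1) (T (k - i.1))) ⟨iv, hiv⟩)) _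
        rcases h with rfl | rfl
        · exact hmono h1.1
        · exact hmono h1.2
    · have hik' : i ≤ k := by omega
      simp only [if_neg hik]
      exact hT i hik'

theorem add_fg_of_sbfg (hann : AnnNilpotent B) (hsb : SBFinitelyGenerated B) :
    AddGroup.FG B := by
  obtain ⟨S, hfin, hgen⟩ := hsb
  obtain ⟨m, hm⟩ := g_vanish hann
  obtain ⟨T, hT⟩ := chain hfin hgen m
  set U : Set B := ⋃ (i : Fin m), T i.1 with hU
  have hUfin : U.Finite := Set.finite_iUnion fun i => (hT i.1 (le_of_lt i.isLt)).1
  have claim : ∀ l, l ≤ m → (⊤ : AddSubgroup B) ≤ AddSubgroup.closure U ⊔ gSeries B l := by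
    intro l
    induction l with
    | zero =>
      intro _
      intro x _
      exact (le_sup_right : gSeries B 0 ≤ _) (mem_g_zero x)
    | succ l ihl =>
      intro hl1
      have h1 := ihl (by omega)
      have hTl : gSeries B l ≤ AddSubgroup.closure U ⊔ gSeries B (l+1) := by
        refine le_trans (hT l (by omega)).2.2 ?_
        refine sup_le ?_ le_sup_right
        refine le_trans (AddSubgroup.closure_mono
          (Set.subset_iUnion (fun (i : Fin m) => T i.1) ⟨l, by omega⟩)) le_sup_left
      exact le_trans h1 (sup_le le_sup_left hTl)
  have hGm : gSeries B m ≤ (⊥ : AddSubgroup B) := fun x hx =>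
    AddSubgroup.mem_bot.2 (hm x hx)
  have htop : (⊤ : AddSubgroup B) ≤ AddSubgroup.closure U :=
    le_trans (claim m le_rfl) (sup_le le_rfl (le_trans hGm bot_le))
  exact AddGroup.fg_iff.2 ⟨U, eq_top_iff.2 htop, hUfin⟩

theorem mul_fg_of_sbfg (hann : AnnNilpotent B) (hsb : SBFinitelyGenerated B) :
    Group.FG B := by
  obtain ⟨S, hfin, hgen⟩ := hsb
  obtain ⟨m, hm⟩ := g_vanish hann
  obtain ⟨T, hT⟩ := chain hfin hgen m
  set U : Set B := ⋃ (i : Fin m), T i.1 with hU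
  have hUfin : U.Finite := Set.finite_iUnion fun i => (hT i.1 (le_of_lt i.isLt)).1
  set H : Subgroup B := Subgroup.closure U with hH
  have hzeroH : (0 : B) ∈ H := by rw [← one_eq_zero]; exact H.one_mem
  have addH : ∀ (n : ℕ) (a b : B), (gSeries B n : Set B) ⊆ ↑H → a ∈ H →
      b ∈ gSeries B n → a + b ∈ H := by
    intro n a b hGH ha hb
    rw [show a + b = a * lam a⁻¹ b from (mul_lam_inv a b).symm]
    exact H.mul_mem ha (hGH (lam_g a⁻¹ hb))
  have step : ∀ l, l < m → (gSeries B (l+1) : Set B) ⊆ ↑H →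
      (gSeries B l : Set B) ⊆ ↑H := by
    intro l hlm IH
    have Padd : ∀ u v : B, (u ∈ H ∧ u ∈ gSeries B l) → (v ∈ H ∧ v ∈ gSeries B l) →
        (u + v ∈ H ∧ u + v ∈ gSeries B l) := by
      rintro u v ⟨huH, huG⟩ ⟨hvH, hvG⟩
      refine ⟨?_, (gSeries B l).add_mem huG hvG⟩
      have hs : starOp u⁻¹ v ∈ gSeries B (l+1) := star_right_g u⁻¹ hvG
      have hc : -v + starOp u⁻¹ v + v + -(starOp u⁻¹ v) ∈ gSeries B (l+1) := by
        have h4 := g_le (show l + 1 ≤ l + (l+1) + 1 by omega)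
          (comm_mem_g ((gSeries B l).neg_mem hvG) hs)
        simpa using h4
      have h1 : v + (-v + starOp u⁻¹ v + v + -(starOp u⁻¹ v)) ∈ H :=
        addH (l+1) _ _ IH hvH hc
      have h2 : v + (-v + starOp u⁻¹ v + v + -(starOp u⁻¹ v)) + starOp u⁻¹ v ∈ H :=
        addH (l+1) _ _ IH h1 hs
      have e : starOp u⁻¹ v + v =
          v + (-v + starOp u⁻¹ v + v + -(starOp u⁻¹ v)) + starOp u⁻¹ v := by
        simp [add_assoc]
      have h3 : lam u⁻¹ v ∈ H := by rw [lam_eq_star_add, e]; exact h2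
      rw [show u + v = u * lam u⁻¹ v from (mul_lam_inv u v).symm]
      exact H.mul_mem huH h3
    have Pneg : ∀ v : B, (v ∈ H ∧ v ∈ gSeries B l) → (-v ∈ H ∧ -v ∈ gSeries B l) := by
      rintro v ⟨hvH, hvG⟩
      refine ⟨?_, (gSeries B l).neg_mem hvG⟩
      have hs : starOp v⁻¹ v ∈ gSeries B (l+1) := star_right_g v⁻¹ hvG
      rw [neg_eq' v]
      exact addH (l+1) _ _ IH (H.inv_mem hvH) hs
    set P : AddSubgroup B :=
      { carrier := {b : B | b ∈ H ∧ b ∈ gSeries B l}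
        zero_mem' := ⟨hzeroH, (gSeries B l).zero_mem⟩
        add_mem' := fun ha hb => Padd _ _ ha hb
        neg_mem' := fun ha => Pneg _ ha } with hP
    have hsub : AddSubgroup.closure (T l ∪ (gSeries B (l+1) : Set B)) ≤ P := by
      rw [AddSubgroup.closure_le]
      rintro t (ht | ht)
      · refine ⟨?_, (hT l (by omega)).2.1 ht⟩
        exact Subgroup.subset_closure (Set.mem_iUnion.2 ⟨⟨l, hlm⟩, ht⟩)
      · exact ⟨IH ht, g_succ_le l ht⟩
    intro x hx
    have hx2 : x ∈ AddSubgroup.closure (T l) ⊔ gSeries B (l+1) := (hT l (by omega)).2.2 hx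
    have hx3 : x ∈ P := by
      apply hsub
      rw [AddSubgroup.closure_union, AddSubgroup.closure_eq]
      exact hx2
    exact hx3.1
  have claim : ∀ d, (gSeries B (m - d) : Set B) ⊆ ↑H := by
    intro d
    induction d with
    | zero =>
      simp only [Nat.sub_zero]
      intro x hx
      rw [hm x hx]
      exact hzeroH
    | succ d ihd =>
      by_cases hdm : d < m
      · have h1 : m - (d+1) < m := by omega
        have h2 : (m - (d+1)) + 1 = m - d := by omega
        apply step _ h1
        rw [h2]; exact ihd
      · have he : m - (d+1) = m - d := by omega
        rw [he]; exact ihd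
  have hall : ∀ x : B, x ∈ H := by
    intro x
    have h0 := claim m
    simp only [Nat.sub_self] at h0
    exact h0 (mem_g_zero x)
  exact Group.fg_iff.2 ⟨U, eq_top_iff.2 fun x _ => hall x, hUfin⟩

theorem sbfg_of_add_fg (h : AddGroup.FG B) : SBFinitelyGenerated B := by
  obtain ⟨S, hcl, hfin⟩ := AddGroup.fg_iff.1 h
  refine ⟨S, hfin, ?_⟩
  intro T hT hST
  set K : AddSubgroup B :=
    { carrier := T
      zero_mem' := hT.1
      add_mem' := fun ha hb => hT.2.1 _ ha _ hb
      neg_mem' := fun ha => hT.2.2.1 _ ha } with hK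
  have hle : AddSubgroup.closure S ≤ K := (AddSubgroup.closure_le _).2 hST
  apply Set.eq_univ_of_forall
  intro x
  exact hle (by rw [hcl]; trivial)

theorem sbfg_of_mul_fg (h : Group.FG B) : SBFinitelyGenerated B := by
  obtain ⟨S, hcl, hfin⟩ := Group.fg_iff.1 h
  refine ⟨S, hfin, ?_⟩
  intro T hT hST
  set K : Subgroup B :=
    { carrier := T
      one_mem' := by rw [one_eq_zero]; exact hT.1
      mul_mem' := fun ha hb => hT.2.2.2.1 _ ha _ hb
      inv_mem' := fun ha => hT.2.2.2.2 _ ha } with hK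
  have hle : Subgroup.closure S ≤ K := (Subgroup.closure_le _).2 hST
  apply Set.eq_univ_of_forall
  intro x
  exact hle (by rw [hcl]; trivial)

theorem stmt8' {B : Type*} [SkewBrace B] (hann : AnnNilpotent B) :
    (SBFinitelyGenerated B ↔ AddGroup.FG B) ∧
    (SBFinitelyGenerated B ↔ Group.FG B) :=
  ⟨⟨fun h => add_fg_of_sbfg hann h, sbfg_of_add_fg⟩,
   ⟨fun h => mul_fg_of_sbfg hann h, sbfg_of_mul_fg⟩⟩


end Auxiliary


/-- Corollary 3.4: for an annihilator nilpotent skew brace the following are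
equivalent: (1) `B` is finitely generated as a skew brace; (2) `(B,+)` is
finitely generated; (3) `(B,∘)` is finitely generated. -/
theorem stmt8 {B : Type*} [SkewBrace B] (hann : AnnNilpotent B) :
    (SBFinitelyGenerated B ↔ AddGroup.FG B) ∧
    (SBFinitelyGenerated B ↔ Group.FG B) :=
  ⟨⟨fun h => add_fg_of_sbfg hann h, sbfg_of_add_fg⟩,
   ⟨fun h => mul_fg_of_sbfg hann h, sbfg_of_mul_fg⟩⟩

end SkewBrace
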